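/- Let A_m ∈ ℝ^{n×n} have spectral radius strictly less than 1, let B ∈ ℝ^{n×m}, and let (x_k) in ℝ^n satisfy x_{k+1} = A_m x_k + B r_k + B ε_{k+1} with ‖r_k‖ ≤ r_max for all k. Suppose there exists a sequence (δ_k) of nonnegative reals with δ_k → 0 such that ‖ε_{k+1}‖ ≤ δ_k ‖x_k‖ for all k. Then the sequence (x_k) is bounded: sup_k ‖x_k‖ < ∞. -/

import Mathlib

open scoped Matrix.Norms.L2Operator NNReal ENNReal

noncomputable def cpxVec {p : ℕ} (v : Fin p → ℝ) : EuclideanSpace ℂ (Fin p) :=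
  (EuclideanSpace.equiv (Fin p) ℂ).symm (fun i => (v i : ℂ))

lemma cpxVec_norm {p : ℕ} (v : Fin p → ℝ) :
    ‖cpxVec v‖ = Real.sqrt (∑ i, v i ^ 2) := by
  rw [EuclideanSpace.norm_eq]
  congr 1
  refine Finset.sum_congr rfl fun i _ => ?_
  simp [cpxVec, Real.norm_eq_abs, sq_abs]

lemma cpxVec_add {p : ℕ} (u v : Fin p → ℝ) :
    cpxVec (u + v) = cpxVec u + cpxVec v := by
  ext i
  simp [cpxVec]

lemma cpxVec_mulVec {q p : ℕ} (M : Matrix (Fin q) (Fin p) ℝ) (v : Fin p → ℝ) :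
    ‖cpxVec (M.mulVec v)‖ ≤ ‖M.map Complex.ofReal‖ * ‖cpxVec v‖ := by
  have h := Matrix.l2_opNorm_mulVec (M.map Complex.ofReal) (cpxVec v)
  have he : (M.map Complex.ofReal).mulVec (cpxVec v) = fun i => ((M.mulVec v i : ℝ) : ℂ) := by
    funext i
    simp [cpxVec, Matrix.mulVec, dotProduct, Matrix.map_apply]
  rwa [he] at h

lemma map_pow_ofReal {p : ℕ} (M : Matrix (Fin p) (Fin p) ℝ) (j : ℕ) :
    (M ^ j).map Complex.ofReal = (M.map Complex.ofReal) ^ j := by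
  have := map_pow (Complex.ofRealHom.mapMatrix :
    Matrix (Fin p) (Fin p) ℝ →+* Matrix (Fin p) (Fin p) ℂ) M j
  simp only [RingHom.mapMatrix_apply] at this
  exact this

lemma exists_pow_norm_lt_one {p : ℕ} (hp : 0 < p) (M : Matrix (Fin p) (Fin p) ℂ)
    (h : ∀ z ∈ spectrum ℂ M, ‖z‖ < 1) : ∃ N, 1 ≤ N ∧ ‖M ^ N‖ < 1 := by
  haveI : NeZero p := ⟨hp.ne'⟩
  have hrad : spectralRadius ℂ M < (1 : ℝ≥0) :=
    spectrum.spectralRadius_lt_of_forall_lt M (fun z hz => by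
      have h2 : (‖z‖₊ : ℝ) < ((1 : ℝ≥0) : ℝ) := by simpa using h z hz
      exact_mod_cast h2)
  have hrad1 : spectralRadius ℂ M < 1 := by simpa using hrad
  have hev := (spectrum.pow_norm_pow_one_div_tendsto_nhds_spectralRadius M).eventually_lt_const
    hrad1
  rcases Filter.eventually_atTop.mp hev with ⟨N₀, hN₀⟩
  refine ⟨max N₀ 1, le_max_right _ _, ?_⟩
  have h1 := hN₀ (max N₀ 1) (le_max_left _ _)
  rw [ENNReal.ofReal_lt_one] at h1
  by_contra hge
  push_neg at hge
  exact absurd (Real.one_le_rpow hge (by positivity)) (not_le.mpr h1)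

open scoped BigOperators

/-- a Schur-stable linear system with bounded input and a
    perturbation that is eventually negligible relative to the state has
    bounded state. -/
theorem schur_stable_relative_perturbation_bounded {n m : ℕ}
    (Am : Matrix (Fin n) (Fin n) ℝ) (B : Matrix (Fin n) (Fin m) ℝ)
    (hSchur : ∀ z ∈ spectrum ℂ (Am.map Complex.ofReal), ‖z‖ < 1)
    (x : ℕ → Fin n → ℝ) (r ε : ℕ → Fin m → ℝ) (rmax : ℝ)
    (hr : ∀ k, Real.sqrt (∑ i, r k i ^ 2) ≤ rmax)
    (hrec : ∀ k, x (k + 1)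
      = Am.mulVec (x k) + B.mulVec (r k) + B.mulVec (ε (k + 1)))
    (δ : ℕ → ℝ) (hδ0 : ∀ k, 0 ≤ δ k)
    (hδlim : Filter.Tendsto δ Filter.atTop (nhds 0))
    (hεx : ∀ k, Real.sqrt (∑ i, ε (k + 1) i ^ 2)
      ≤ δ k * Real.sqrt (∑ i, x k i ^ 2)) :
    ∃ C : ℝ, ∀ k, Real.sqrt (∑ i, x k i ^ 2) ≤ C := by
  rcases Nat.eq_zero_or_pos n with hn | hn
  · subst hn
    exact ⟨0, fun k => by simp⟩
  obtain ⟨N, hN1, hcN⟩ := exists_pow_norm_lt_one hn (Am.map Complex.ofReal) hSchur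
  have hEeq : ∀ (v : Fin n → ℝ), Real.sqrt (∑ i, v i ^ 2) = ‖cpxVec v‖ :=
    fun v => (cpxVec_norm v).symm
  have hpow : ∀ (j : ℕ) (v : Fin n → ℝ),
      ‖cpxVec ((Am ^ j).mulVec v)‖ ≤ ‖(Am.map Complex.ofReal) ^ j‖ * ‖cpxVec v‖ := by
    intro j v
    have h := cpxVec_mulVec (Am ^ j) v
    rwa [map_pow_ofReal] at h
  -- the contraction rate ρ
  set c := max ‖(Am.map Complex.ofReal) ^ N‖ (1/2) with hc
  have hc0 : 0 < c := lt_of_lt_of_le (by norm_num) (le_max_right _ _)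
  have hc1 : c < 1 := max_lt hcN (by norm_num)
  set ρ : ℝ := c ^ (1 / (N : ℝ)) with hρ
  have hρ0 : 0 < ρ := Real.rpow_pos_of_pos hc0 _
  have hρ1 : ρ < 1 := Real.rpow_lt_one hc0.le hc1 (by positivity)
  have hρN : ρ ^ N = c := by
    rw [hρ, ← Real.rpow_natCast (c ^ (1 / (N : ℝ))) N, ← Real.rpow_mul hc0.le,
      one_div_mul_cancel (by exact_mod_cast (by omega : N ≠ 0)), Real.rpow_one]
  have hAN : ∀ v : Fin n → ℝ, ‖cpxVec ((Am ^ N).mulVec v)‖ ≤ ρ ^ N * ‖cpxVec v‖ := by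
    intro v
    rw [hρN]
    exact le_trans (hpow N v)
      (mul_le_mul_of_nonneg_right (le_max_left _ _) (norm_nonneg _))
  -- the Lyapunov-type functional ν
  set ν : (Fin n → ℝ) → ℝ :=
    fun v => ∑ j ∈ Finset.range N, ρ ^ (N - 1 - j) * ‖cpxVec ((Am ^ j).mulVec v)‖ with hνdef
  have hν0 : ∀ v, 0 ≤ ν v :=
    fun v => Finset.sum_nonneg fun j _ => mul_nonneg (by positivity) (norm_nonneg _)
  set K : ℝ := (ρ ^ (N - 1))⁻¹ with hK
  have hK0 : 0 < K := by positivity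
  have hEν : ∀ v, ‖cpxVec v‖ ≤ K * ν v := by
    intro v
    have h0 : ρ ^ (N - 1) * ‖cpxVec v‖ ≤ ν v := by
      have h := Finset.single_le_sum
        (f := fun j => ρ ^ (N - 1 - j) * ‖cpxVec ((Am ^ j).mulVec v)‖)
        (fun j _ => mul_nonneg (by positivity) (norm_nonneg _))
        (Finset.mem_range.mpr (by omega : 0 < N))
      simpa [Matrix.one_mulVec] using h
    have h1 : K * (ρ ^ (N - 1) * ‖cpxVec v‖) = ‖cpxVec v‖ := by
      rw [hK]; field_simp
    calc ‖cpxVec v‖ = K * (ρ ^ (N - 1) * ‖cpxVec v‖) := h1.symm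
      _ ≤ K * ν v := mul_le_mul_of_nonneg_left h0 hK0.le
  set Mc : ℝ := ∑ j ∈ Finset.range N, ρ ^ (N - 1 - j) * ‖(Am.map Complex.ofReal) ^ j‖ with hMc
  have hMc0 : 0 ≤ Mc :=
    Finset.sum_nonneg fun j _ => mul_nonneg (by positivity) (norm_nonneg _)
  have hνE : ∀ v, ν v ≤ Mc * ‖cpxVec v‖ := by
    intro v
    rw [hνdef, hMc, Finset.sum_mul]
    refine Finset.sum_le_sum fun j _ => ?_
    rw [mul_assoc]
    exact mul_le_mul_of_nonneg_left (hpow j v) (by positivity)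
  have hνadd : ∀ u v, ν (u + v) ≤ ν u + ν v := by
    intro u v
    rw [hνdef, ← Finset.sum_add_distrib]
    refine Finset.sum_le_sum fun j _ => ?_
    rw [← mul_add]
    refine mul_le_mul_of_nonneg_left ?_ (by positivity)
    rw [Matrix.mulVec_add, cpxVec_add]
    exact norm_add_le _ _
  -- contraction of ν along Am
  have hνA : ∀ v, ν (Am.mulVec v) ≤ ρ * ν v := by
    intro v
    have hsplit : ∀ j : ℕ, (Am ^ j).mulVec (Am.mulVec v) = (Am ^ (j + 1)).mulVec v := by
      intro j
      rw [Matrix.mulVec_mulVec, ← pow_succ]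
    have hT1 : ∑ j ∈ Finset.range (N + 1), ρ ^ (N - j) * ‖cpxVec ((Am ^ j).mulVec v)‖
        = ρ ^ N * ‖cpxVec v‖ + ν (Am.mulVec v) := by
      rw [Finset.sum_range_succ']
      have e1 : ∀ j, ρ ^ (N - (j + 1)) * ‖cpxVec ((Am ^ (j + 1)).mulVec v)‖
          = ρ ^ (N - 1 - j) * ‖cpxVec ((Am ^ j).mulVec (Am.mulVec v))‖ := by
        intro j
        rw [hsplit j]
        congr 2
        omega
      simp only [e1]
      rw [hνdef]
      simp [Matrix.one_mulVec, add_comm]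
    have hT2 : ∑ j ∈ Finset.range (N + 1), ρ ^ (N - j) * ‖cpxVec ((Am ^ j).mulVec v)‖
        = ρ * ν v + ‖cpxVec ((Am ^ N).mulVec v)‖ := by
      rw [Finset.sum_range_succ]
      have e2 : ∑ j ∈ Finset.range N, ρ ^ (N - j) * ‖cpxVec ((Am ^ j).mulVec v)‖
          = ρ * ν v := by
        rw [hνdef, Finset.mul_sum]
        refine Finset.sum_congr rfl fun j hj => ?_
        have hj' : j < N := Finset.mem_range.mp hj
        have : N - j = (N - 1 - j) + 1 := by omega
        rw [this, pow_succ]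
        ring
      rw [e2]
      simp
    have hA := hAN v
    have := hT1.symm.trans hT2
    linarith
  -- constants
  set CB : ℝ := ‖B.map Complex.ofReal‖ with hCB
  have hCB0 : 0 ≤ CB := norm_nonneg _
  have hrmax0 : 0 ≤ rmax := le_trans (Real.sqrt_nonneg _) (hr 0)
  set Q : ℝ := Mc * CB * rmax with hQ
  have hQ0 : 0 ≤ Q := by positivity
  set β : ℝ := Mc * CB * K with hβ
  have hβ0 : 0 ≤ β := by positivity
  -- one-step estimate
  have hrecν : ∀ k, ν (x (k + 1)) ≤ ρ * ν (x k) + Q + β * δ k * ν (x k) := by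
    intro k
    rw [hrec k]
    have h1 : ν (Am.mulVec (x k) + B.mulVec (r k) + B.mulVec (ε (k + 1)))
        ≤ ν (Am.mulVec (x k)) + ν (B.mulVec (r k)) + ν (B.mulVec (ε (k + 1))) := by
      have a1 := hνadd (Am.mulVec (x k) + B.mulVec (r k)) (B.mulVec (ε (k + 1)))
      have a2 := hνadd (Am.mulVec (x k)) (B.mulVec (r k))
      linarith
    have h2 : ν (B.mulVec (r k)) ≤ Q := by
      have b2 := cpxVec_mulVec B (r k)
      have b3 : ‖cpxVec (r k)‖ ≤ rmax := by rw [cpxVec_norm]; exact hr k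
      calc ν (B.mulVec (r k)) ≤ Mc * ‖cpxVec (B.mulVec (r k))‖ := hνE _
        _ ≤ Mc * (CB * ‖cpxVec (r k)‖) := mul_le_mul_of_nonneg_left b2 hMc0
        _ ≤ Mc * (CB * rmax) :=
            mul_le_mul_of_nonneg_left (mul_le_mul_of_nonneg_left b3 hCB0) hMc0
        _ = Q := by rw [hQ]; ring
    have h3 : ν (B.mulVec (ε (k + 1))) ≤ β * δ k * ν (x k) := by
      have c3 : ‖cpxVec (ε (k + 1))‖ ≤ δ k * ‖cpxVec (x k)‖ := by
        rw [cpxVec_norm, cpxVec_norm]; exact hεx k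
      have c4 : ‖cpxVec (x k)‖ ≤ K * ν (x k) := hEν _
      calc ν (B.mulVec (ε (k + 1))) ≤ Mc * ‖cpxVec (B.mulVec (ε (k + 1)))‖ := hνE _
        _ ≤ Mc * (CB * ‖cpxVec (ε (k + 1))‖) :=
            mul_le_mul_of_nonneg_left (cpxVec_mulVec B _) hMc0
        _ ≤ Mc * (CB * (δ k * (K * ν (x k)))) := by
            refine mul_le_mul_of_nonneg_left ?_ hMc0
            refine mul_le_mul_of_nonneg_left ?_ hCB0
            calc ‖cpxVec (ε (k + 1))‖ ≤ δ k * ‖cpxVec (x k)‖ := c3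
              _ ≤ δ k * (K * ν (x k)) := mul_le_mul_of_nonneg_left c4 (hδ0 k)
        _ = β * δ k * ν (x k) := by rw [hβ]; ring
    have h4 := hνA (x k)
    linarith
  -- eventually the perturbation coefficient is small
  set σ : ℝ := (1 + ρ) / 2 with hσdef
  have hσ1 : σ < 1 := by rw [hσdef]; linarith
  have hσ0 : 0 ≤ σ := by rw [hσdef]; linarith
  have hεpos : 0 < (1 - ρ) / (2 * (β + 1)) := div_pos (by linarith) (by positivity)
  have hev := hδlim.eventually_lt_const hεpos
  obtain ⟨K₀, hK₀⟩ := Filter.eventually_atTop.mp hev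
  have hstep : ∀ k, K₀ ≤ k → ν (x (k + 1)) ≤ σ * ν (x k) + Q := by
    intro k hk
    have hδk := (hK₀ k hk).le
    have hβδ : β * δ k ≤ (1 - ρ) / 2 := by
      have e1 : β * ((1 - ρ) / (2 * (β + 1))) = (1 - ρ) / 2 * (β / (β + 1)) := by
        field_simp
      have e2 : β / (β + 1) ≤ 1 := by
        rw [div_le_one (by linarith)]
        linarith
      calc β * δ k ≤ β * ((1 - ρ) / (2 * (β + 1))) :=
            mul_le_mul_of_nonneg_left hδk hβ0
        _ = (1 - ρ) / 2 * (β / (β + 1)) := e1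
        _ ≤ (1 - ρ) / 2 * 1 := mul_le_mul_of_nonneg_left e2 (by linarith)
        _ = (1 - ρ) / 2 := mul_one _
    have h5 := hrecν k
    have h6 : β * δ k * ν (x k) ≤ (1 - ρ) / 2 * ν (x k) :=
      mul_le_mul_of_nonneg_right hβδ (hν0 _)
    rw [hσdef]
    linarith
  set D : ℝ := max (ν (x K₀)) (Q / (1 - σ)) with hD
  have h1σ : 0 < 1 - σ := by linarith
  have hbound : ∀ k, K₀ ≤ k → ν (x k) ≤ D := by
    intro k hk
    induction k, hk using Nat.le_induction with
    | base => exact le_max_left _ _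
    | succ k hk ih =>
      have h7 := hstep k hk
      have hD2 : Q / (1 - σ) ≤ D := le_max_right _ _
      have h8 : Q ≤ (1 - σ) * D := by
        rw [div_le_iff₀ h1σ] at hD2
        linarith
      have h9 : σ * ν (x k) ≤ σ * D := mul_le_mul_of_nonneg_left ih hσ0
      linarith
  refine ⟨max ((Finset.range (K₀ + 1)).sup' (by simp) fun j => Real.sqrt (∑ i, x j i ^ 2))
    (K * D), fun k => ?_⟩
  rcases le_or_gt K₀ k with hk | hk
  · refine le_trans ?_ (le_max_right _ _)
    rw [hEeq]
    calc ‖cpxVec (x k)‖ ≤ K * ν (x k) := hEν _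
      _ ≤ K * D := mul_le_mul_of_nonneg_left (hbound k hk) hK0.le
  · exact le_trans (Finset.le_sup' (f := fun j => Real.sqrt (∑ i, x j i ^ 2))
      (Finset.mem_range.mpr (by omega))) (le_max_left _ _)
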